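/- Let (p_m), (q_n) be positive sequences with partial sums P_m = Σ_{i=0}^m p_i, Q_n = Σ_{j=0}^n q_j, let σ_{mn} = (1/(P_m Q_n)) Σ_{i=0}^m Σ_{j=0}^n p_i q_j u_{ij} be the weighted means of a double sequence (u_{mn}). Then for all μ > m and η > n: u_{mn} − σ_{mn} = [P_μQ_η/((P_μ−P_m)(Q_η−Q_n))](σ_{μη} − σ_{μn} − σ_{mη} + σ_{mn}) + [P_μ/(P_μ−P_m)](σ_{μn} − σ_{mn}) + [Q_η/(Q_η−Q_n)](σ_{mη} − σ_{mn}) − [1/((P_μ−P_m)(Q_η−Q_n))] Σ_{i=m+1}^{μ} Σ_{j=n+1}^{η} p_i q_j (u_{ij} − u_{mn}). -/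

import Mathlib

/-- Representation of u_{mn} - σ_{mn} for indices μ > m and η > n. -/
theorem stmt6 (u : ℕ → ℕ → ℝ) (p q : ℕ → ℝ)
    (hp : ∀ i, 0 < p i) (hq : ∀ j, 0 < q j)
    (P Q : ℕ → ℝ)
    (hP : ∀ m : ℕ, P m = ∑ i ∈ Finset.range (m + 1), p i)
    (hQ : ∀ n : ℕ, Q n = ∑ j ∈ Finset.range (n + 1), q j)
    (σ : ℕ → ℕ → ℝ)
    (hσ : ∀ m n : ℕ, σ m n =
      (∑ i ∈ Finset.range (m + 1), ∑ j ∈ Finset.range (n + 1), p i * q j * u i j)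
        / (P m * Q n))
    (m n μ η : ℕ) (hμ : m < μ) (hη : n < η) :
    u m n - σ m n =
      P μ * Q η / ((P μ - P m) * (Q η - Q n)) * (σ μ η - σ μ n - σ m η + σ m n)
      + P μ / (P μ - P m) * (σ μ n - σ m n)
      + Q η / (Q η - Q n) * (σ m η - σ m n)
      - (1 / ((P μ - P m) * (Q η - Q n))) *
          ∑ i ∈ Finset.Icc (m + 1) μ, ∑ j ∈ Finset.Icc (n + 1) η,
            p i * q j * (u i j - u m n) := by
  -- splitting lemma for sums
  have hsplit : ∀ (a b : ℕ) (f : ℕ → ℝ), a < b →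
      ∑ i ∈ Finset.range (b + 1), f i
        = ∑ i ∈ Finset.range (a + 1), f i + ∑ i ∈ Finset.Icc (a + 1) b, f i := by
    intro a b f hab
    have h : Finset.Icc (a + 1) b = Finset.Ico (a + 1) (b + 1) := by
      rw [Finset.Ico_add_one_right_eq_Icc]
    rw [h, Finset.range_eq_Ico, Finset.range_eq_Ico]
    exact (Finset.sum_Ico_consecutive f (n := a + 1) (k := b + 1) (Nat.zero_le _) (by omega)).symm
  -- positivity facts
  have hPpos : ∀ k : ℕ, 0 < P k := by
    intro k; rw [hP]
    exact Finset.sum_pos (fun i _ => hp i) ⟨0, by simp⟩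
  have hQpos : ∀ k : ℕ, 0 < Q k := by
    intro k; rw [hQ]
    exact Finset.sum_pos (fun j _ => hq j) ⟨0, by simp⟩
  have hPd : P μ - P m = ∑ i ∈ Finset.Icc (m + 1) μ, p i := by
    rw [hP, hP, hsplit m μ p hμ]; ring
  have hQd : Q η - Q n = ∑ j ∈ Finset.Icc (n + 1) η, q j := by
    rw [hQ, hQ, hsplit n η q hη]; ring
  have hPdpos : 0 < P μ - P m := by
    rw [hPd]; exact Finset.sum_pos (fun i _ => hp i) ⟨m + 1, by simp; omega⟩
  have hQdpos : 0 < Q η - Q n := by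
    rw [hQd]; exact Finset.sum_pos (fun j _ => hq j) ⟨n + 1, by simp; omega⟩
  -- splitting the inner sum
  have inner : ∀ (s : Finset ℕ),
      (∑ i ∈ s, ∑ j ∈ Finset.range (η + 1), p i * q j * u i j)
        = (∑ i ∈ s, ∑ j ∈ Finset.range (n + 1), p i * q j * u i j)
          + ∑ i ∈ s, ∑ j ∈ Finset.Icc (n + 1) η, p i * q j * u i j := by
    intro s
    rw [← Finset.sum_add_distrib]
    exact Finset.sum_congr rfl fun i _ => hsplit n η _ hη
  have hSμη : (∑ i ∈ Finset.range (μ + 1), ∑ j ∈ Finset.range (η + 1), p i * q j * u i j)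
      = (∑ i ∈ Finset.range (m + 1), ∑ j ∈ Finset.range (n + 1), p i * q j * u i j)
        + (∑ i ∈ Finset.range (m + 1), ∑ j ∈ Finset.Icc (n + 1) η, p i * q j * u i j)
        + (∑ i ∈ Finset.Icc (m + 1) μ, ∑ j ∈ Finset.range (n + 1), p i * q j * u i j)
        + (∑ i ∈ Finset.Icc (m + 1) μ, ∑ j ∈ Finset.Icc (n + 1) η, p i * q j * u i j) := by
    rw [hsplit m μ _ hμ, inner, inner]; ring
  have hSμn : (∑ i ∈ Finset.range (μ + 1), ∑ j ∈ Finset.range (n + 1), p i * q j * u i j)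
      = (∑ i ∈ Finset.range (m + 1), ∑ j ∈ Finset.range (n + 1), p i * q j * u i j)
        + (∑ i ∈ Finset.Icc (m + 1) μ, ∑ j ∈ Finset.range (n + 1), p i * q j * u i j) :=
    hsplit m μ _ hμ
  have hSmη : (∑ i ∈ Finset.range (m + 1), ∑ j ∈ Finset.range (η + 1), p i * q j * u i j)
      = (∑ i ∈ Finset.range (m + 1), ∑ j ∈ Finset.range (n + 1), p i * q j * u i j)
        + (∑ i ∈ Finset.range (m + 1), ∑ j ∈ Finset.Icc (n + 1) η, p i * q j * u i j) :=
    inner _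
  -- the remainder sum
  have hR : (∑ i ∈ Finset.Icc (m + 1) μ, ∑ j ∈ Finset.Icc (n + 1) η,
        p i * q j * (u i j - u m n))
      = (∑ i ∈ Finset.Icc (m + 1) μ, ∑ j ∈ Finset.Icc (n + 1) η, p i * q j * u i j)
        - (P μ - P m) * (Q η - Q n) * u m n := by
    rw [hPd, hQd]
    have h1 : ∀ i j : ℕ, p i * q j * (u i j - u m n)
        = p i * q j * u i j - p i * q j * u m n := fun i j => by ring
    simp only [h1, Finset.sum_sub_distrib]
    congr 1
    rw [Finset.sum_mul_sum, Finset.sum_mul]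
    refine Finset.sum_congr rfl fun i _ => ?_
    rw [Finset.sum_mul]
  rw [hσ, hσ, hσ, hσ, hSμη, hSμn, hSmη, hR]
  have h1 := (hPpos m).ne'
  have h2 := (hPpos μ).ne'
  have h3 := (hQpos n).ne'
  have h4 := (hQpos η).ne'
  have h5 := hPdpos.ne'
  have h6 := hQdpos.ne'
  field_simp
  ring
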